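/- Suppose bidder j plays the CMRA-truthful strategy with convex strictly increasing valuation U_j, U_j(0)=0, and bidder i with convex strictly increasing valuation U_i considers winning quantity x ∈ [1-λ, λ] with a deviating bid D_i(x). Any winning deviating bid must satisfy D_i(x) ≥ U_j(λ) - U_j(1-x). If θ_i ≥ θ_j (u_i ≥ u_j pointwise), then for every x ∈ [1-λ,λ], U_i(x) - (U_j(λ) - U_j(1-x)) ≤ U_i(λ) - (U_j(λ) - U_j(1-λ)); i.e., no deviation yields more surplus than the CMRA-truthful outcome of winning λ at total price U_j(λ) - U_j(1-λ). -/

import Mathlib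

open Set

/-- Monotonicity from a nonnegative derivative on a convex set. -/
private lemma mono_aux {s : Set ℝ} (hs : Convex ℝ s) {f f' : ℝ → ℝ}
    (hd : ∀ x ∈ s, HasDerivAt f (f' x) x) (hnn : ∀ x ∈ s, 0 ≤ f' x) :
    MonotoneOn f s := by
  apply monotoneOn_of_deriv_nonneg hs
  · exact fun x hx => (hd x hx).continuousAt.continuousWithinAt
  · exact fun x hx => ((hd x (interior_subset hx)).differentiableAt).differentiableWithinAt
  · intro x hx
    rw [(hd x (interior_subset hx)).deriv]
    exact hnn x (interior_subset hx)

/-- Against a CMRA-truthful opponent j, any winning deviating bid on x must be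
at least U_j(λ) - U_j(1-x), and for a stronger bidder i no such deviation improves on the
CMRA-truthful outcome of winning λ at total price U_j(λ) - U_j(1-λ). -/
theorem no_profitable_deviation_strong_bidder
    (lam : ℝ) (hlam : 1/2 < lam ∧ lam < 1)
    (Ui Uj ui uj : ℝ → ℝ)
    (hUi0 : Ui 0 = 0) (hUj0 : Uj 0 = 0)
    (hconvi : ConvexOn ℝ (Set.Icc (0:ℝ) lam) Ui)
    (hconvj : ConvexOn ℝ (Set.Icc (0:ℝ) lam) Uj)
    (hmonoi : StrictMonoOn Ui (Set.Icc (0:ℝ) lam))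
    (hmonoj : StrictMonoOn Uj (Set.Icc (0:ℝ) lam))
    (hdi : ∀ x ∈ Set.Icc (0:ℝ) lam, HasDerivAt Ui (ui x) x)
    (hdj : ∀ x ∈ Set.Icc (0:ℝ) lam, HasDerivAt Uj (uj x) x)
    (hdom : ∀ x ∈ Set.Icc (0:ℝ) lam, uj x ≤ ui x) :
    (∀ x ∈ Set.Icc (1 - lam) lam, ∀ D : ℝ,
      Uj lam ≤ D + Uj (1 - x) → Uj lam - Uj (1 - x) ≤ D) ∧
    (∀ x ∈ Set.Icc (1 - lam) lam,
      Ui x - (Uj lam - Uj (1 - x)) ≤ Ui lam - (Uj lam - Uj (1 - lam))) := by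
  obtain ⟨hl1, hl2⟩ := hlam
  constructor
  · intro x _ D hD; linarith
  · intro x hx
    obtain ⟨hx1, hx2⟩ := hx
    have hmem : ∀ t, 1 - lam ≤ t → t ≤ lam → t ∈ Set.Icc (0:ℝ) lam := by
      intro t h1 h2; exact ⟨by linarith, h2⟩
    -- uj is monotone on [0, lam]
    have hujmono : ∀ a b : ℝ, a ∈ Set.Icc (0:ℝ) lam → b ∈ Set.Icc (0:ℝ) lam → a ≤ b →
        uj a ≤ uj b := by
      intro a b ha hb hab
      rcases eq_or_lt_of_le hab with rfl | hab'
      · exact le_rfl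
      · exact (hconvj.le_slope_of_hasDerivAt ha hb hab' (hdj a ha)).trans
          (hconvj.slope_le_of_hasDerivAt ha hb hab' (hdj b hb))
    -- F = Ui - Uj is monotone on [0, lam]
    have hFmono : MonotoneOn (fun t => Ui t - Uj t) (Set.Icc (0:ℝ) lam) := by
      apply mono_aux (convex_Icc _ _) (f' := fun t => ui t - uj t)
      · exact fun t ht => (hdi t ht).sub (hdj t ht)
      · exact fun t ht => sub_nonneg.2 (hdom t ht)
    -- G t = Ui t + Uj (1 - t) is monotone on [1/2, lam]
    have hGmono : MonotoneOn (fun t => Ui t + Uj (1 - t)) (Set.Icc (1/2 : ℝ) lam) := by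
      apply mono_aux (convex_Icc _ _) (f' := fun t => ui t - uj (1 - t))
      · intro t ht
        have ht1 : t ∈ Set.Icc (0:ℝ) lam := ⟨by linarith [ht.1], ht.2⟩
        have ht2 : (1 - t) ∈ Set.Icc (0:ℝ) lam := ⟨by linarith [ht.2], by linarith [ht.1]⟩
        have := ((hdj (1 - t) ht2).comp t (((hasDerivAt_id t).const_sub 1)))
        exact ((hdi t ht1).add this).congr_deriv (by ring)
      · intro t ht
        have ht1 : t ∈ Set.Icc (0:ℝ) lam := ⟨by linarith [ht.1], ht.2⟩
        have ht2 : (1 - t) ∈ Set.Icc (0:ℝ) lam := ⟨by linarith [ht.2], by linarith [ht.1]⟩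
        have h1 : uj (1 - t) ≤ uj t := hujmono _ _ ht2 ht1 (by linarith [ht.1])
        have h2 : uj t ≤ ui t := hdom t ht1
        linarith
    suffices h : Ui x + Uj (1 - x) ≤ Ui lam + Uj (1 - lam) by linarith
    rcases le_total (1/2 : ℝ) x with hhalf | hhalf
    · have := hGmono ⟨hhalf, hx2⟩ ⟨le_of_lt hl1, le_refl lam⟩ hx2
      simpa using this
    · -- first step: G x ≤ G (1 - x)
      have hxm : x ∈ Set.Icc (0:ℝ) lam := hmem x hx1 hx2
      have h1xm : (1 - x) ∈ Set.Icc (0:ℝ) lam := hmem (1 - x) (by linarith) (by linarith)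
      have hstep : Ui x + Uj (1 - x) ≤ Ui (1 - x) + Uj x := by
        have := hFmono hxm h1xm (by linarith)
        simp only at this
        linarith
      have h1xmem : (1 - x) ∈ Set.Icc (1/2 : ℝ) lam := ⟨by linarith, by linarith⟩
      have := hGmono h1xmem ⟨le_of_lt hl1, le_refl lam⟩ (by linarith)
      simp only [sub_sub_cancel] at this
      linarith
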